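/- (Distinct discriminants in the uniformly definite case.) Let W : ℝ → ℝ be a continuous, bounded, 1-periodic function, let w : ℝ → ℝ be a continuous, 1-periodic function bounded below by a positive constant, and let E₁ < E₂ be real numbers. For i ∈ {1,2} and λ ∈ ℝ, let Φ_λ^i and Ψ_λ^i be the unique C² solutions of y''(x) + (W(x) + E_i) y(x) = λ w(x) y(x) on ℝ with Φ_λ^i(0) = 1, (Φ_λ^i)'(0) = 0, Ψ_λ^i(0) = 0, (Ψ_λ^i)'(0) = 1, and define D_i(λ) := Φ_λ^i(1) + (Ψ_λ^i)'(1). Then there exists λ ∈ ℝ such that |D₁(λ)| ≠ |D₂(λ)|. -/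

import Mathlib

open Set Filter Topology

private lemma aux_diff2 {f : ℝ → ℝ} (hf : ContDiff ℝ 2 f) :
    Differentiable ℝ (deriv f) :=
  ((contDiff_succ_iff_deriv.mp
      (by exact_mod_cast hf : ContDiff ℝ ((1:ℕ)+1) f)).2.2).differentiable (by norm_num)

/-- Core positivity lemma: if `f'' = P f` with `P ≥ 0`, `f 0 ≥ 0`, `f' 0 ≥ 0`,
and `f 0 + f' 0 > 0`, then on `[0,1]` we have `f t ≥ f 0 + f' 0 · t` and
`f' t ≥ f' 0`. -/
private lemma core_pos (f P : ℝ → ℝ) (hf : ContDiff ℝ 2 f)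
    (hode : ∀ x, deriv (deriv f) x = P x * f x) (hP : ∀ x, 0 ≤ P x)
    (h0 : 0 ≤ f 0) (h0' : 0 ≤ deriv f 0) (hsum : 0 < f 0 + deriv f 0) :
    ∀ t ∈ Set.Icc (0:ℝ) 1, f 0 + deriv f 0 * t ≤ f t ∧ deriv f 0 ≤ deriv f t := by
  have hdf : Differentiable ℝ f := hf.differentiable (by norm_num)
  have hdf' : Differentiable ℝ (deriv f) := aux_diff2 hf
  have hcf : Continuous f := hdf.continuous
  have hcf' : Continuous (deriv f) := hdf'.continuous
  -- If f ≥ 0 on [0,t], then the conclusions hold on [0,t].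
  have good : ∀ t, 0 ≤ t → (∀ s ∈ Set.Icc (0:ℝ) t, 0 ≤ f s) →
      ∀ s ∈ Set.Icc (0:ℝ) t, deriv f 0 ≤ deriv f s ∧ f 0 + deriv f 0 * s ≤ f s := by
    intro t ht hnn
    have hmono : MonotoneOn (deriv f) (Set.Icc 0 t) := by
      apply monotoneOn_of_deriv_nonneg (convex_Icc 0 t) hcf'.continuousOn
        hdf'.differentiableOn
      intro x hx
      rw [interior_Icc] at hx
      rw [hode]
      exact mul_nonneg (hP x) (hnn x ⟨hx.1.le, hx.2.le⟩)
    have hd0 : ∀ s ∈ Set.Icc (0:ℝ) t, deriv f 0 ≤ deriv f s := by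
      intro s hs
      exact hmono ⟨le_rfl, ht⟩ hs hs.1
    have hg : MonotoneOn (fun s => f s - deriv f 0 * s) (Set.Icc 0 t) := by
      apply monotoneOn_of_deriv_nonneg (convex_Icc 0 t)
        (by fun_prop) (by fun_prop)
      intro x hx
      rw [interior_Icc] at hx
      have hder : deriv (fun s => f s - deriv f 0 * s) x = deriv f x - deriv f 0 := by
        have h1 : HasDerivAt (fun s => f s - deriv f 0 * s)
            (deriv f x - deriv f 0 * 1) x :=
          ((hdf x).hasDerivAt).sub ((hasDerivAt_id x).const_mul (deriv f 0))
        simpa using h1.deriv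
      rw [hder, sub_nonneg]
      exact hd0 x ⟨hx.1.le, hx.2.le⟩
    intro s hs
    refine ⟨hd0 s hs, ?_⟩
    have := hg ⟨le_rfl, ht⟩ hs hs.1
    simp only [mul_zero, sub_zero] at this
    linarith
  -- The set where f stays nonnegative.
  set A : Set ℝ := {t | t ∈ Set.Icc (0:ℝ) 1 ∧ ∀ s ∈ Set.Icc (0:ℝ) t, 0 ≤ f s} with hAdef
  have h0A : (0:ℝ) ∈ A := by
    refine ⟨⟨le_rfl, zero_le_one⟩, fun s hs => ?_⟩
    have : s = 0 := le_antisymm hs.2 hs.1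
    rw [this]; exact h0
  have hAne : A.Nonempty := ⟨0, h0A⟩
  have hbdd : BddAbove A := ⟨1, fun t ht => ht.1.2⟩
  set T := sSup A with hTdef
  have hT0 : 0 ≤ T := le_csSup hbdd h0A
  have hT1 : T ≤ 1 := csSup_le hAne (fun t ht => ht.1.2)
  have hall : ∀ s, 0 ≤ s → s < T → 0 ≤ f s := by
    intro s h0s hsT
    obtain ⟨a, ha, hlt⟩ := exists_lt_of_lt_csSup hAne hsT
    exact ha.2 s ⟨h0s, hlt.le⟩
  have hTA : T ∈ A := by
    refine ⟨⟨hT0, hT1⟩, ?_⟩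
    intro s hs
    rcases lt_or_eq_of_le hs.2 with h | h
    · exact hall s hs.1 h
    · subst h
      rcases eq_or_lt_of_le hT0 with h0T | h0T
      · rw [← h0T]; exact h0
      · -- s = T > 0 : limit from the left
        have hmem : ∀ u ∈ Set.Ioo (0:ℝ) T, 0 ≤ f u := fun u hu => hall u hu.1.le hu.2
        have hne : (𝓝[Set.Ioo (0:ℝ) T] T).NeBot := by
          rw [← mem_closure_iff_nhdsWithin_neBot, closure_Ioo h0T.ne]
          exact ⟨h0T.le, le_rfl⟩
        have hcw : Tendsto f (𝓝[Set.Ioo (0:ℝ) T] T) (𝓝 (f T)) :=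
          (hcf.continuousAt).continuousWithinAt.tendsto
        exact ge_of_tendsto hcw (eventually_mem_nhdsWithin.mono (fun u hu => hmem u hu))
  have hT_eq : T = 1 := by
    by_contra hTne
    have hTlt : T < 1 := lt_of_le_of_ne hT1 hTne
    have hgood := good T hT0 hTA.2
    have hfT : f 0 + deriv f 0 * T ≤ f T := (hgood T ⟨hT0, le_rfl⟩).2
    have hfT0 : 0 ≤ f T := by nlinarith [mul_nonneg h0' hT0]
    -- In both cases we find t' ∈ A with T < t', contradiction with sSup.
    have hcontr : ∀ t', T < t' → t' ∈ A → False := by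
      intro t' hlt ht'
      exact absurd (le_csSup hbdd ht') (not_le.mpr hlt)
    rcases eq_or_lt_of_le hfT0 with hfTz | hfTpos
    · -- f T = 0 forces f 0 = 0, T = 0, deriv f 0 > 0
      have h1 : f 0 + deriv f 0 * T ≤ 0 := by rw [← hfTz] at hfT; exact hfT
      have hf00 : f 0 = 0 := by nlinarith
      have hd0pos : 0 < deriv f 0 := by linarith
      have hTz : T = 0 := by nlinarith
      -- f is positive just to the right of 0
      have hslope : Tendsto (fun u => f u / u) (𝓝[≠] (0:ℝ)) (𝓝 (deriv f 0)) := by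
        have h := (hdf 0).hasDerivAt
        have h2 := hasDerivAt_iff_tendsto_slope.mp h
        refine h2.congr' ?_
        filter_upwards [self_mem_nhdsWithin] with u hu
        rw [slope_def_field, hf00, sub_zero, sub_zero]
      have hev : ∀ᶠ u in 𝓝[>] (0:ℝ), 0 < f u := by
        have h3 : Tendsto (fun u => f u / u) (𝓝[>] (0:ℝ)) (𝓝 (deriv f 0)) :=
          hslope.mono_left (nhdsWithin_mono 0 (fun x hx => ne_of_gt hx))
        filter_upwards [h3.eventually (Ioi_mem_nhds (half_lt_self hd0pos)),
          self_mem_nhdsWithin] with u hu1 hu2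
        have hu2' : (0:ℝ) < u := hu2
        have : 0 < f u / u := lt_trans (half_pos hd0pos) hu1
        have := mul_pos this hu2'
        rwa [div_mul_cancel₀ _ (ne_of_gt hu2')] at this
      obtain ⟨e, he, hsub⟩ := mem_nhdsGT_iff_exists_Ioo_subset.mp hev
      have hepos : (0:ℝ) < e := he
      have heA : min 1 (e/2) ∈ A := by
        constructor
        · exact ⟨le_min zero_le_one (by linarith), min_le_left _ _⟩
        · intro s hs
          rcases eq_or_lt_of_le hs.1 with hs0 | hs0
          · rw [← hs0, hf00]
          · have hse : s < e :=
              lt_of_le_of_lt (hs.2.trans (min_le_right _ _)) (by linarith)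
            exact (hsub ⟨hs0, hse⟩).le
      refine hcontr _ ?_ heA
      rw [hTz]
      exact lt_min one_pos (by linarith)
    · -- f T > 0 : extend by continuity
      have hopen : IsOpen {u : ℝ | 0 < f u} := isOpen_lt continuous_const hcf
      obtain ⟨e, he, hsub⟩ := Metric.isOpen_iff.mp hopen T hfTpos
      have heA : min 1 (T + e/2) ∈ A := by
        constructor
        · exact ⟨le_min zero_le_one (by linarith), min_le_left _ _⟩
        · intro s hs
          rcases le_or_gt s T with hsT | hsT
          · exact hTA.2 s ⟨hs.1, hsT⟩
          · have hse : s ≤ T + e/2 := hs.2.trans (min_le_right _ _)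
            have : dist s T < e := by
              rw [Real.dist_eq, abs_of_pos (by linarith)]
              linarith
            exact (hsub this).le
      exact hcontr _ (lt_min hTlt (by linarith)) heA
  intro t ht
  have hA1 : ∀ s ∈ Set.Icc (0:ℝ) 1, 0 ≤ f s := by
    intro s hs
    exact hTA.2 s (by rw [hT_eq]; exact hs)
  have := good 1 zero_le_one hA1 t ht
  exact ⟨this.2, this.1⟩

private lemma wron_deriv (f g P Q : ℝ → ℝ) (hf : ContDiff ℝ 2 f) (hg : ContDiff ℝ 2 g)
    (hfo : ∀ x, deriv (deriv f) x = P x * f x) (hgo : ∀ x, deriv (deriv g) x = Q x * g x)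
    (x : ℝ) :
    HasDerivAt (fun y => deriv f y * g y - f y * deriv g y)
      ((P x - Q x) * (f x * g x)) x := by
  have hdf : Differentiable ℝ f := hf.differentiable (by norm_num)
  have hdg : Differentiable ℝ g := hg.differentiable (by norm_num)
  have hdf' : Differentiable ℝ (deriv f) := aux_diff2 hf
  have hdg' : Differentiable ℝ (deriv g) := aux_diff2 hg
  have h1 : HasDerivAt (fun y => deriv f y * g y)
      (deriv (deriv f) x * g x + deriv f x * deriv g x) x :=
    ((hdf' x).hasDerivAt).mul ((hdg x).hasDerivAt)
  have h2 : HasDerivAt (fun y => f y * deriv g y)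
      (deriv f x * deriv g x + f x * deriv (deriv g) x) x :=
    ((hdf x).hasDerivAt).mul ((hdg' x).hasDerivAt)
  have h3 := h1.sub h2
  exact h3.congr_deriv (by rw [hfo, hgo]; ring)

theorem stmt_11 (W w : ℝ → ℝ)
    (hW_cont : Continuous W) (hW_bdd : ∃ C : ℝ, ∀ x, |W x| ≤ C)
    (hW_per : Function.Periodic W 1)
    (hw_cont : Continuous w) (hw_per : Function.Periodic w 1)
    (hw_pos : ∃ c : ℝ, 0 < c ∧ ∀ x, c ≤ w x)
    (E₁ E₂ : ℝ) (hE : E₁ < E₂)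
    (Φ Ψ : Fin 2 → ℝ → ℝ → ℝ) (Es : Fin 2 → ℝ)
    (hEs : Es 0 = E₁ ∧ Es 1 = E₂)
    (hΦ_smooth : ∀ i lam, ContDiff ℝ 2 (Φ i lam))
    (hΦ_ode : ∀ i lam x,
      deriv (deriv (Φ i lam)) x + (W x + Es i) * Φ i lam x = lam * w x * Φ i lam x)
    (hΦ0 : ∀ i lam, Φ i lam 0 = 1) (hΦ'0 : ∀ i lam, deriv (Φ i lam) 0 = 0)
    (hΨ_smooth : ∀ i lam, ContDiff ℝ 2 (Ψ i lam))
    (hΨ_ode : ∀ i lam x,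
      deriv (deriv (Ψ i lam)) x + (W x + Es i) * Ψ i lam x = lam * w x * Ψ i lam x)
    (hΨ0 : ∀ i lam, Ψ i lam 0 = 0) (hΨ'0 : ∀ i lam, deriv (Ψ i lam) 0 = 1)
    (D : Fin 2 → ℝ → ℝ) (hD : ∀ i lam, D i lam = Φ i lam 1 + deriv (Ψ i lam) 1) :
    ∃ lam : ℝ, |D 0 lam| ≠ |D 1 lam| := by
  obtain ⟨C, hC⟩ := hW_bdd
  obtain ⟨c, hcpos, hcw⟩ := hw_pos
  obtain ⟨hE1, hE2⟩ := hEs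
  set lam : ℝ := (|C| + |E₁| + |E₂|) / c with hlamdef
  have hlam0 : 0 ≤ lam := div_nonneg (by positivity) hcpos.le
  set P : Fin 2 → ℝ → ℝ := fun i x => lam * w x - W x - Es i with hPdef
  have hPnn : ∀ i x, 0 ≤ P i x := by
    intro i x
    have h1 : lam * c ≤ lam * w x := mul_le_mul_of_nonneg_left (hcw x) hlam0
    have h2 : lam * c = |C| + |E₁| + |E₂| := div_mul_cancel₀ _ hcpos.ne'
    have h3 : W x ≤ |C| := le_trans (le_trans (le_abs_self _) (hC x)) (le_abs_self C)
    have h4 : Es i ≤ |E₁| + |E₂| := by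
      revert i
      rw [Fin.forall_fin_two]
      constructor
      · rw [hE1]; linarith [le_abs_self E₁, abs_nonneg E₂]
      · rw [hE2]; linarith [le_abs_self E₂, abs_nonneg E₁]
    simp only [hPdef]
    linarith
  have hΦode' : ∀ i x, deriv (deriv (Φ i lam)) x = P i x * Φ i lam x := by
    intro i x
    simp only [hPdef]
    linear_combination hΦ_ode i lam x
  have hΨode' : ∀ i x, deriv (deriv (Ψ i lam)) x = P i x * Ψ i lam x := by
    intro i x
    simp only [hPdef]
    linear_combination hΨ_ode i lam x
  have hδ : ∀ x, P 0 x - P 1 x = E₂ - E₁ := by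
    intro x; simp only [hPdef, hE1, hE2]; ring
  -- Core estimates
  have coreΦ : ∀ i, ∀ t ∈ Set.Icc (0:ℝ) 1,
      1 ≤ Φ i lam t ∧ 0 ≤ deriv (Φ i lam) t := by
    intro i t ht
    have h := core_pos (Φ i lam) (P i) (hΦ_smooth i lam) (hΦode' i) (hPnn i)
      (by rw [hΦ0]; norm_num) (le_of_eq (hΦ'0 i lam).symm)
      (by rw [hΦ0, hΦ'0]; norm_num) t ht
    rw [hΦ0, hΦ'0] at h
    constructor
    · linarith [h.1]
    · linarith [h.2]
  have coreΨ : ∀ i, ∀ t ∈ Set.Icc (0:ℝ) 1,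
      t ≤ Ψ i lam t ∧ 1 ≤ deriv (Ψ i lam) t := by
    intro i t ht
    have h := core_pos (Ψ i lam) (P i) (hΨ_smooth i lam) (hΨode' i) (hPnn i)
      (le_of_eq (hΨ0 i lam).symm) (by rw [hΨ'0]; norm_num)
      (by rw [hΨ0, hΨ'0]; norm_num) t ht
    rw [hΨ0, hΨ'0] at h
    constructor
    · linarith [h.1]
    · linarith [h.2]
  have hEpos : 0 < E₂ - E₁ := by linarith
  -- differentiability facts
  have hdΦ : ∀ i, Differentiable ℝ (Φ i lam) := fun i =>
    (hΦ_smooth i lam).differentiable (by norm_num)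
  have hdΦ' : ∀ i, Differentiable ℝ (deriv (Φ i lam)) := fun i => aux_diff2 (hΦ_smooth i lam)
  have hdΨ : ∀ i, Differentiable ℝ (Ψ i lam) := fun i =>
    (hΨ_smooth i lam).differentiable (by norm_num)
  have hdΨ' : ∀ i, Differentiable ℝ (deriv (Ψ i lam)) := fun i => aux_diff2 (hΨ_smooth i lam)
  -- Wronskian for Φ
  set VΦ : ℝ → ℝ := fun x => deriv (Φ 0 lam) x * Φ 1 lam x - Φ 0 lam x * deriv (Φ 1 lam) x
    with hVΦdef
  have hVΦd : ∀ x, HasDerivAt VΦ ((P 0 x - P 1 x) * (Φ 0 lam x * Φ 1 lam x)) x :=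
    wron_deriv _ _ _ _ (hΦ_smooth 0 lam) (hΦ_smooth 1 lam) (hΦode' 0) (hΦode' 1)
  have hVΦmono : StrictMonoOn VΦ (Set.Icc 0 1) := by
    apply strictMonoOn_of_deriv_pos (convex_Icc 0 1)
    · exact (((hdΦ' 0).continuous.mul (hdΦ 1).continuous).sub
        ((hdΦ 0).continuous.mul (hdΦ' 1).continuous)).continuousOn
    · intro x hx
      rw [interior_Icc] at hx
      rw [(hVΦd x).deriv, hδ]
      have h0 := (coreΦ 0 x ⟨hx.1.le, hx.2.le⟩).1
      have h1 := (coreΦ 1 x ⟨hx.1.le, hx.2.le⟩).1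
      exact mul_pos hEpos (mul_pos (by linarith) (by linarith))
  have hVΦ0 : VΦ 0 = 0 := by
    simp only [hVΦdef, hΦ0, hΦ'0]; ring
  have hVΦpos : ∀ t ∈ Set.Ioc (0:ℝ) 1, 0 < VΦ t := by
    intro t ht
    have := hVΦmono ⟨le_rfl, zero_le_one⟩ ⟨ht.1.le, ht.2⟩ ht.1
    rwa [hVΦ0] at this
  -- ratio of Φ's
  have hΦcomp : Φ 1 lam 1 < Φ 0 lam 1 := by
    have hΦ1pos : ∀ x ∈ Set.Icc (0:ℝ) 1, (0:ℝ) < Φ 1 lam x := fun x hx => by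
      linarith [(coreΦ 1 x hx).1]
    have hρmono : StrictMonoOn (fun x => Φ 0 lam x / Φ 1 lam x) (Set.Icc 0 1) := by
      apply strictMonoOn_of_deriv_pos (convex_Icc 0 1)
      · exact ContinuousOn.div (hdΦ 0).continuous.continuousOn
          (hdΦ 1).continuous.continuousOn (fun x hx => (hΦ1pos x hx).ne')
      · intro x hx
        rw [interior_Icc] at hx
        have hne : Φ 1 lam x ≠ 0 := (hΦ1pos x ⟨hx.1.le, hx.2.le⟩).ne'
        have hdd : HasDerivAt (fun x => Φ 0 lam x / Φ 1 lam x)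
            ((deriv (Φ 0 lam) x * Φ 1 lam x - Φ 0 lam x * deriv (Φ 1 lam) x)
              / (Φ 1 lam x)^2) x :=
          ((hdΦ 0 x).hasDerivAt).div ((hdΦ 1 x).hasDerivAt) hne
        rw [hdd.deriv]
        exact div_pos (hVΦpos x ⟨hx.1, hx.2.le⟩)
          (pow_pos (hΦ1pos x ⟨hx.1.le, hx.2.le⟩) 2)
    have h := hρmono ⟨le_rfl, zero_le_one⟩ ⟨zero_le_one, le_rfl⟩ one_pos
    simp only [hΦ0] at h
    norm_num at h
    have hpos := hΦ1pos 1 ⟨zero_le_one, le_rfl⟩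
    exact (one_lt_div hpos).mp h
  -- Wronskian for Ψ
  set VΨ : ℝ → ℝ := fun x => deriv (Ψ 0 lam) x * Ψ 1 lam x - Ψ 0 lam x * deriv (Ψ 1 lam) x
    with hVΨdef
  have hVΨd : ∀ x, HasDerivAt VΨ ((P 0 x - P 1 x) * (Ψ 0 lam x * Ψ 1 lam x)) x :=
    wron_deriv _ _ _ _ (hΨ_smooth 0 lam) (hΨ_smooth 1 lam) (hΨode' 0) (hΨode' 1)
  have hVΨmono : StrictMonoOn VΨ (Set.Icc 0 1) := by
    apply strictMonoOn_of_deriv_pos (convex_Icc 0 1)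
    · exact (((hdΨ' 0).continuous.mul (hdΨ 1).continuous).sub
        ((hdΨ 0).continuous.mul (hdΨ' 1).continuous)).continuousOn
    · intro x hx
      rw [interior_Icc] at hx
      rw [(hVΨd x).deriv, hδ]
      have h0 := (coreΨ 0 x ⟨hx.1.le, hx.2.le⟩).1
      have h1 := (coreΨ 1 x ⟨hx.1.le, hx.2.le⟩).1
      exact mul_pos hEpos (mul_pos (by linarith [hx.1]) (by linarith [hx.1]))
  have hVΨ0 : VΨ 0 = 0 := by
    simp only [hVΨdef, hΨ0, hΨ'0]; ring
  have hVΨpos : ∀ t ∈ Set.Ioc (0:ℝ) 1, 0 < VΨ t := by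
    intro t ht
    have := hVΨmono ⟨le_rfl, zero_le_one⟩ ⟨ht.1.le, ht.2⟩ ht.1
    rwa [hVΨ0] at this
  -- ratio of Ψ's on (0,1]
  have hΨpos : ∀ i, ∀ x ∈ Set.Ioc (0:ℝ) 1, (0:ℝ) < Ψ i lam x := by
    intro i x hx
    linarith [(coreΨ i x ⟨hx.1.le, hx.2⟩).1, hx.1]
  have hσmono : StrictMonoOn (fun x => Ψ 0 lam x / Ψ 1 lam x) (Set.Ioc 0 1) := by
    apply strictMonoOn_of_deriv_pos (convex_Ioc 0 1)
    · exact ContinuousOn.div (hdΨ 0).continuous.continuousOn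
        (hdΨ 1).continuous.continuousOn (fun x hx => (hΨpos 1 x hx).ne')
    · intro x hx
      rw [interior_Ioc] at hx
      have hxI : x ∈ Set.Ioc (0:ℝ) 1 := ⟨hx.1, hx.2.le⟩
      have hne : Ψ 1 lam x ≠ 0 := (hΨpos 1 x hxI).ne'
      have hdd : HasDerivAt (fun x => Ψ 0 lam x / Ψ 1 lam x)
          ((deriv (Ψ 0 lam) x * Ψ 1 lam x - Ψ 0 lam x * deriv (Ψ 1 lam) x)
            / (Ψ 1 lam x)^2) x :=
        ((hdΨ 0 x).hasDerivAt).div ((hdΨ 1 x).hasDerivAt) hne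
      rw [hdd.deriv]
      exact div_pos (hVΨpos x hxI) (pow_pos (hΨpos 1 x hxI) 2)
  -- limit of the ratio at 0⁺ is 1
  have hslope : ∀ i, Tendsto (fun t => Ψ i lam t / t) (𝓝[>] (0:ℝ)) (𝓝 1) := by
    intro i
    have h := (hdΨ i 0).hasDerivAt
    rw [hΨ'0] at h
    have h2 := hasDerivAt_iff_tendsto_slope.mp h
    have h3 : Tendsto (fun t => Ψ i lam t / t) (𝓝[≠] (0:ℝ)) (𝓝 1) := by
      refine h2.congr' ?_
      filter_upwards [self_mem_nhdsWithin] with u hu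
      rw [slope_def_field, hΨ0, sub_zero, sub_zero]
    exact h3.mono_left (nhdsWithin_mono 0 (fun x hx => ne_of_gt hx))
  have hσlim : Tendsto (fun t => Ψ 0 lam t / Ψ 1 lam t) (𝓝[>] (0:ℝ)) (𝓝 1) := by
    have h := (hslope 0).div (hslope 1) one_ne_zero
    norm_num at h
    refine h.congr' ?_
    filter_upwards [Ioo_mem_nhdsGT_of_mem (Set.mem_Ico.mpr ⟨le_rfl, zero_lt_one⟩)] with t ht
    have ht0 : t ≠ 0 := ht.1.ne'
    have hΨ1 : Ψ 1 lam t ≠ 0 := (hΨpos 1 t ⟨ht.1, ht.2.le⟩).ne'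
    rw [Pi.div_apply]
    field_simp
  have hhalf : (1:ℝ) ≤ Ψ 0 lam (1/2) / Ψ 1 lam (1/2) := by
    apply le_of_tendsto hσlim
    filter_upwards [Ioo_mem_nhdsGT_of_mem
      (Set.mem_Ico.mpr ⟨le_rfl, one_half_pos⟩)] with t ht
    exact (hσmono ⟨ht.1, by linarith [ht.2]⟩ ⟨one_half_pos, by norm_num⟩ ht.2).le
  have hΨval : Ψ 1 lam 1 ≤ Ψ 0 lam 1 := by
    have h2 : Ψ 0 lam (1/2) / Ψ 1 lam (1/2) < Ψ 0 lam 1 / Ψ 1 lam 1 :=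
      hσmono ⟨one_half_pos, by norm_num⟩ ⟨one_pos, le_rfl⟩ (by norm_num)
    have h3 : (1:ℝ) < Ψ 0 lam 1 / Ψ 1 lam 1 := lt_of_le_of_lt hhalf h2
    have hpos := hΨpos 1 1 ⟨one_pos, le_rfl⟩
    linarith [(one_lt_div hpos).mp h3]
  -- conclude derivative comparison at 1
  have hΨ'comp : deriv (Ψ 1 lam) 1 < deriv (Ψ 0 lam) 1 := by
    have hV1 := hVΨpos 1 ⟨one_pos, le_rfl⟩
    simp only [hVΨdef] at hV1
    have hΨ11 := (coreΨ 1 1 ⟨zero_le_one, le_rfl⟩).1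
    have hΨ'11 := (coreΨ 1 1 ⟨zero_le_one, le_rfl⟩).2
    nlinarith [mul_le_mul_of_nonneg_right hΨval (by linarith : (0:ℝ) ≤ deriv (Ψ 1 lam) 1)]
  -- finish
  refine ⟨lam, ?_⟩
  have hΦ11 := (coreΦ 1 1 ⟨zero_le_one, le_rfl⟩).1
  have hΨ'11 := (coreΨ 1 1 ⟨zero_le_one, le_rfl⟩).2
  have hD1 : 2 ≤ D 1 lam := by rw [hD]; linarith
  have hlt : D 1 lam < D 0 lam := by rw [hD, hD]; linarith
  rw [abs_of_pos (by linarith), abs_of_pos (by linarith)]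
  exact ne_of_gt hlt
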